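/- Let X ⊆ ℝ be measurable, and for each x ∈ X let (J_i(x))_{i∈ℕ} be a sequence of nested intervals converging to x (i.e. ⋂_i J_i(x) = {x}, J_{i+1}(x) ⊆ J_i(x)) such that for any x₁, x₂ ∈ X and any i, the intervals J_i(x₁) and J_i(x₂) are either equal or disjoint. Let (Q_n) be measurable subsets of ℝ and set q_n(x) = |Q_n ∩ J_n(x)| / |J_n(x)| (ratios of Lebesgue measures). Let Y be the set of x ∈ X which belong to only finitely many Q_n. If ∑_n q_n(x) < ∞ for almost every x ∈ X, then |Y| = |X|. -/

import Mathlib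

open MeasureTheory Metric Filter Set
open scoped NNReal ENNReal Topology

instance : IsUnifLocDoublingMeasure (volume : Measure ℝ) := by
  refine ⟨⟨2, Eventually.of_forall fun ε x => ?_⟩⟩
  simp only [Real.volume_closedBall]
  have h2 : ((2:ℝ≥0):ℝ≥0∞) = ENNReal.ofReal 2 := by norm_num
  rw [h2, ← ENNReal.ofReal_mul (by norm_num)]

lemma shrink_aux (a b : ℕ → ℝ) (hab : ∀ n, a n < b n)
    (hnest : ∀ n, Set.Icc (a (n+1)) (b (n+1)) ⊆ Set.Icc (a n) (b n)) (x : ℝ)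
    (hconv : (⋂ i, Set.Icc (a i) (b i)) = {x}) :
    Filter.Tendsto (fun n => b n - a n) atTop (𝓝 0) := by
  have hx : ∀ n, x ∈ Set.Icc (a n) (b n) := by
    intro n
    have : x ∈ ⋂ i, Set.Icc (a i) (b i) := by rw [hconv]; exact rfl
    exact Set.mem_iInter.1 this n
  have hmono : ∀ n, a n ≤ a (n+1) ∧ b (n+1) ≤ b n := by
    intro n
    have h := hnest n
    have h1 := h (Set.left_mem_Icc.2 (hab (n+1)).le)
    have h2 := h (Set.right_mem_Icc.2 (hab (n+1)).le)
    exact ⟨h1.1, h2.2⟩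
  have ha : Monotone a := monotone_nat_of_le_succ fun n => (hmono n).1
  have hb : Antitone b := antitone_nat_of_succ_le fun n => (hmono n).2
  have hbddA : BddAbove (Set.range a) := ⟨x, by rintro _ ⟨n, rfl⟩; exact (hx n).1⟩
  have hbddB : BddBelow (Set.range b) := ⟨x, by rintro _ ⟨n, rfl⟩; exact (hx n).2⟩
  set A := ⨆ n, a n with hA
  set B := ⨅ n, b n with hB
  have haA : ∀ n, a n ≤ A := fun n => le_ciSup hbddA n
  have hbB : ∀ n, B ≤ b n := fun n => ciInf_le hbddB n
  have hAx : A ≤ x := ciSup_le fun n => (hx n).1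
  have hxB : x ≤ B := le_ciInf fun n => (hx n).2
  have hsub : Set.Icc A B ⊆ {x} := by
    rw [← hconv]
    intro y hy
    exact Set.mem_iInter.2 fun n => ⟨(haA n).trans hy.1, hy.2.trans (hbB n)⟩
  have hAeq : A = x := hsub (Set.left_mem_Icc.2 (hAx.trans hxB))
  have hBeq : B = x := hsub (Set.right_mem_Icc.2 (hAx.trans hxB))
  have h1 : Tendsto a atTop (𝓝 x) := hAeq ▸ tendsto_atTop_ciSup ha hbddA
  have h2 : Tendsto b atTop (𝓝 x) := hBeq ▸ tendsto_atTop_ciInf hb hbddB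
  simpa using h2.sub h1

lemma countable_aux (X : Set ℝ) (J : ℝ → Set ℝ)
    (hJint : ∀ x ∈ X, ∃ a b : ℝ, a < b ∧ J x = Set.Icc a b)
    (hdisj : ∀ x₁ ∈ X, ∀ x₂ ∈ X, J x₁ = J x₂ ∨ Disjoint (J x₁) (J x₂)) :
    (J '' X).Countable := by
  apply Set.PairwiseDisjoint.countable_of_nonempty_interior (s := id) (a := J '' X)
  · rintro I₁ h₁ I₂ h₂ hne
    obtain ⟨x₁, hx₁, rfl⟩ := h₁
    obtain ⟨x₂, hx₂, rfl⟩ := h₂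
    rcases hdisj x₁ hx₁ x₂ hx₂ with h | h
    · exact absurd h hne
    · exact h
  · rintro I ⟨x, hx, rfl⟩
    obtain ⟨a, b, hab, h⟩ := hJint x hx
    simp only [id, h, interior_Icc]
    exact ⟨(a+b)/2, by constructor <;> linarith⟩

lemma exists_g_aux (X : Set ℝ) (hX : MeasurableSet X) (J : ℝ → Set ℝ)
    (hJint : ∀ x ∈ X, ∃ a b : ℝ, a < b ∧ J x = Set.Icc a b)
    (hmem : ∀ x ∈ X, x ∈ J x)
    (hdisj : ∀ x₁ ∈ X, ∀ x₂ ∈ X, J x₁ = J x₂ ∨ Disjoint (J x₁) (J x₂))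
    (Qn : Set ℝ) :
    ∃ g : ℝ → ℝ≥0∞, Measurable g ∧
      ∀ x ∈ X, g x = volume (Qn ∩ J x) / volume (J x) := by
  classical
  set C : Set (Set ℝ) := J '' X with hC
  have hmeasI : ∀ I ∈ C, MeasurableSet I := by
    rintro I ⟨x, hx, rfl⟩
    obtain ⟨a, b, hab, h⟩ := hJint x hx
    rw [h]; exact measurableSet_Icc
  have hCc : C.Countable := countable_aux X J hJint hdisj
  haveI := hCc.to_subtype
  refine ⟨fun y => ∑' (I : C), (X ∩ (I : Set ℝ)).indicator
    (fun _ => volume (Qn ∩ (I : Set ℝ)) / volume (I : Set ℝ)) y, ?_, ?_⟩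
  · exact Measurable.ennreal_tsum fun I =>
      Measurable.indicator measurable_const (hX.inter (hmeasI I I.2))
  · intro x hx
    have hJx : J x ∈ C := Set.mem_image_of_mem _ hx
    show (∑' (I : C), (X ∩ (I : Set ℝ)).indicator
      (fun _ => volume (Qn ∩ (I : Set ℝ)) / volume (I : Set ℝ)) x) = _
    rw [tsum_eq_single (⟨J x, hJx⟩ : C)]
    · simp [Set.indicator_of_mem, Set.mem_inter hx (hmem x hx)]
    · rintro ⟨I, hI⟩ hne
      apply Set.indicator_of_notMem
      rintro ⟨hxX, hxI⟩
      obtain ⟨x', hx', rfl⟩ := hI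
      rcases hdisj x' hx' x hx with h | h
      · exact hne (Subtype.ext h)
      · exact h.ne_of_mem hxI (hmem x hx) rfl

/-- Borel–Cantelli type lemma for nested interval families. -/
theorem stmt_0 (X : Set ℝ) (hX : MeasurableSet X)
    (J : ℕ → ℝ → Set ℝ)
    (hJint : ∀ x ∈ X, ∀ i, ∃ a b : ℝ, a < b ∧ J i x = Set.Icc a b)
    (hmem : ∀ x ∈ X, ∀ i, x ∈ J i x)
    (hnest : ∀ x ∈ X, ∀ i, J (i + 1) x ⊆ J i x)
    (hconv : ∀ x ∈ X, (⋂ i, J i x) = {x})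
    (hdisj : ∀ x₁ ∈ X, ∀ x₂ ∈ X, ∀ i, J i x₁ = J i x₂ ∨ Disjoint (J i x₁) (J i x₂))
    (Q : ℕ → Set ℝ) (hQ : ∀ n, MeasurableSet (Q n))
    (q : ℕ → ℝ → ℝ)
    (hq : ∀ x ∈ X, ∀ n,
      q n x = (volume (Q n ∩ J n x)).toReal / (volume (J n x)).toReal)
    (hsum : ∀ᵐ x ∂(volume.restrict X), Summable fun n => q n x) :
    volume {x | x ∈ X ∧ {n | x ∈ Q n}.Finite} = volume X := by
  classical
  have hpiece : ∀ n : ℕ, ∀ x ∈ X, ∀ y ∈ X, y ∈ J n x → J n y = J n x := by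
    intro n x hx y hy hyJ
    rcases hdisj y hy x hx n with h | h
    · exact h
    · exact absurd rfl (h.ne_of_mem (hmem y hy n) hyJ)
  have hJmeas : ∀ x ∈ X, ∀ n, MeasurableSet (J n x) := by
    intro x hx n
    obtain ⟨a, b, _, h⟩ := hJint x hx n
    rw [h]; exact measurableSet_Icc
  have hJvol : ∀ x ∈ X, ∀ n, volume (J n x) ≠ 0 ∧ volume (J n x) ≠ ⊤ := by
    intro x hx n
    obtain ⟨a, b, hab, h⟩ := hJint x hx n
    rw [h, Real.volume_Icc]
    refine ⟨?_, ENNReal.ofReal_ne_top⟩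
    simp only [ne_eq, ENNReal.ofReal_eq_zero, not_le]
    linarith
  -- measurable versions of the ratio functions
  have hg := fun n : ℕ => exists_g_aux X hX (J n) (fun x hx => hJint x hx n)
    (fun x hx => hmem x hx n) (fun x₁ h1 x₂ h2 => hdisj x₁ h1 x₂ h2 n) (Q n)
  choose g hgm hgX using hg
  -- a.e. finiteness of the ENNReal sums
  have hgsum : ∀ᵐ x ∂(volume.restrict X), (∑' n, g n x) < ⊤ := by
    filter_upwards [hsum, ae_restrict_mem hX] with x hx hxX
    have hq0 : ∀ n, 0 ≤ q n x := fun n => by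
      rw [hq x hxX n]; positivity
    have hval : ∀ n, g n x = ENNReal.ofReal (q n x) := by
      intro n
      rw [hgX n x hxX, hq x hxX n]
      have h1 := (hJvol x hxX n).1
      have h2 := (hJvol x hxX n).2
      rw [ENNReal.ofReal_div_of_pos (ENNReal.toReal_pos h1 h2), ENNReal.ofReal_toReal h2,
        ENNReal.ofReal_toReal
          (ne_top_of_le_ne_top h2 (measure_mono Set.inter_subset_right))]
    calc (∑' n, g n x) = ∑' n, ENNReal.ofReal (q n x) := by simp_rw [hval]
    _ = ENNReal.ofReal (∑' n, q n x) := (ENNReal.ofReal_tsum_of_nonneg hq0 hx).symm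
    _ < ⊤ := ENNReal.ofReal_lt_top
  -- the bad set
  set A : Set ℝ := X ∩ ⋂ k, ⋃ n, ⋃ (_ : k ≤ n), Q n with hA
  have hAmeas : MeasurableSet A := hX.inter (MeasurableSet.iInter fun k =>
    MeasurableSet.iUnion fun n => MeasurableSet.iUnion fun _ => hQ n)
  have hAdesc : ∀ x, x ∈ A ↔ x ∈ X ∧ {n | x ∈ Q n}.Infinite := by
    intro x
    simp only [hA, Set.mem_inter_iff, Set.mem_iInter, Set.mem_iUnion]
    refine and_congr_right fun _ => ?_
    rw [← Nat.frequently_atTop_iff_infinite, frequently_atTop]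
    simp only [ge_iff_le, exists_prop]
  suffices hA0 : volume A = 0 by
    have heq : {x | x ∈ X ∧ {n | x ∈ Q n}.Finite} = X \ A := by
      ext x
      simp only [Set.mem_setOf_eq, Set.mem_diff, hAdesc, ← Set.not_infinite]
      tauto
    rw [heq, measure_diff_null hA0]
  by_contra hA0
  -- a bounded piece of positive measure
  obtain ⟨M, hM⟩ : ∃ M : ℕ, volume (A ∩ Set.Icc (-(M:ℝ)) M) ≠ 0 := by
    by_contra h
    push_neg at h
    apply hA0
    have hsub : A ⊆ ⋃ M : ℕ, A ∩ Set.Icc (-(M:ℝ)) M := by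
      intro x hx
      obtain ⟨M, hMx⟩ := exists_nat_ge |x|
      have := abs_le.1 hMx
      exact Set.mem_iUnion.2 ⟨M, hx, this.1, this.2⟩
    exact measure_mono_null hsub (measure_iUnion_null h)
  set B := A ∩ Set.Icc (-(M:ℝ)) M with hB
  have hBmeas : MeasurableSet B := hAmeas.inter measurableSet_Icc
  have hBfin : volume B ≠ ⊤ :=
    ne_top_of_le_ne_top (by rw [Real.volume_Icc]; exact ENNReal.ofReal_ne_top)
      (measure_mono Set.inter_subset_right)
  -- sum function and level sets
  set Sg : ℝ → ℝ≥0∞ := fun x => ∑' n, g n x with hSgdef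
  have hSgm : Measurable Sg := Measurable.ennreal_tsum hgm
  have hXsumnull : volume ({x | ¬ Sg x < ⊤} ∩ X) = 0 := by
    have := ae_iff.1 hgsum
    rwa [Measure.restrict_apply' hX] at this
  obtain ⟨N, hN⟩ : ∃ N : ℕ, volume (B ∩ Sg ⁻¹' Set.Iic (N : ℝ≥0∞)) ≠ 0 := by
    by_contra h
    push_neg at h
    apply hM
    have hsub : B ⊆ (⋃ N : ℕ, B ∩ Sg ⁻¹' Set.Iic (N : ℝ≥0∞)) ∪ ({x | ¬ Sg x < ⊤} ∩ X) := by
      intro x hx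
      by_cases hfin : Sg x < ⊤
      · obtain ⟨N, hNx⟩ := ENNReal.exists_nat_gt hfin.ne
        exact Or.inl (Set.mem_iUnion.2 ⟨N, hx, hNx.le⟩)
      · exact Or.inr ⟨hfin, hx.1.1⟩
    exact measure_mono_null hsub
      (measure_union_null (measure_iUnion_null h) hXsumnull)
  set E := B ∩ Sg ⁻¹' Set.Iic (N : ℝ≥0∞) with hEdef
  have hEmeas : MeasurableSet E := hBmeas.inter (hSgm measurableSet_Iic)
  have hEB : E ⊆ B := Set.inter_subset_left
  have hEA : E ⊆ A := hEB.trans Set.inter_subset_left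
  have hEX : E ⊆ X := hEA.trans Set.inter_subset_left
  have hEfin : volume E ≠ ⊤ := ne_top_of_le_ne_top hBfin (measure_mono hEB)
  have hEsum : ∀ x ∈ E, Sg x ≤ N := fun x hx => hx.2
  -- density points
  have hdens := IsUnifLocDoublingMeasure.ae_tendsto_measure_inter_div
    (volume : Measure ℝ) E 1
  have key : ∀ᵐ x ∂(volume.restrict E),
      ∃ m, ∀ n, m ≤ n → volume (J n x) ≤ 2 * volume (E ∩ J n x) := by
    filter_upwards [hdens, ae_restrict_mem hEmeas] with x hx hxE
    have hxX : x ∈ X := hEX hxE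
    choose a b hab hJeq using fun n => hJint x hxX n
    have hlen : Tendsto (fun n => b n - a n) atTop (𝓝 0) := by
      apply shrink_aux a b hab
      · intro n
        rw [← hJeq n, ← hJeq (n+1)]
        exact hnest x hxX n
      · have := hconv x hxX
        simp_rw [hJeq] at this
        exact this
    set δ : ℕ → ℝ := fun n => (b n - a n)/2 with hδdef
    set w : ℕ → ℝ := fun n => (a n + b n)/2 with hwdef
    have hball : ∀ n, closedBall (w n) (δ n) = J n x := by
      intro n
      rw [Real.closedBall_eq_Icc, hJeq n]
      congr 1 <;> simp only [hδdef, hwdef] <;> ring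
    have hδpos : ∀ n, 0 < δ n := fun n => by
      have := hab n
      simp only [hδdef]
      linarith
    have hδlim : Tendsto δ atTop (𝓝[>] 0) := by
      apply tendsto_nhdsWithin_of_tendsto_nhds_of_eventually_within
      · simpa [hδdef] using hlen.div_const 2
      · exact Eventually.of_forall fun n => hδpos n
    have hx' := hx w δ hδlim (Eventually.of_forall fun n => by
      rw [one_mul, hball n]; exact hmem x hxX n)
    have hhalf : ∀ᶠ n in atTop, (1/2 : ℝ≥0∞) <
        volume (E ∩ closedBall (w n) (δ n)) / volume (closedBall (w n) (δ n)) :=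
      hx'.eventually (eventually_gt_nhds (by norm_num))
    obtain ⟨m, hm⟩ := eventually_atTop.1 hhalf
    refine ⟨m, fun n hn => ?_⟩
    have h2 := hm n hn
    rw [hball n] at h2
    have h0 := (hJvol x hxX n).1
    have ht := (hJvol x hxX n).2
    rw [ENNReal.lt_div_iff_mul_lt (Or.inl h0) (Or.inl ht)] at h2
    have h21 : (2:ℝ≥0∞) * (1/2) = 1 := by
      rw [one_div, ENNReal.mul_inv_cancel] <;> norm_num
    calc volume (J n x) = 2 * (1/2 * volume (J n x)) := by
          rw [← mul_assoc, h21, one_mul]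
    _ ≤ 2 * volume (E ∩ J n x) := mul_le_mul_right h2.le 2
  -- uniform density sets
  set F' : ℕ → Set ℝ := fun m =>
    {x ∈ E | ∀ n, m ≤ n → volume (J n x) ≤ 2 * volume (E ∩ J n x)} with hF'def
  obtain ⟨m₁, hm₁⟩ : ∃ m₁, volume (F' m₁) ≠ 0 := by
    by_contra h
    push_neg at h
    apply hN
    have h1 : volume ({x | ¬ ∃ m, ∀ n, m ≤ n →
        volume (J n x) ≤ 2 * volume (E ∩ J n x)} ∩ E) = 0 := by
      have := ae_iff.1 key
      rwa [Measure.restrict_apply' hEmeas] at this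
    have hsub : E ⊆ (⋃ m, F' m) ∪ ({x | ¬ ∃ m, ∀ n, m ≤ n →
        volume (J n x) ≤ 2 * volume (E ∩ J n x)} ∩ E) := by
      intro x hx
      by_cases hex : ∃ m, ∀ n, m ≤ n → volume (J n x) ≤ 2 * volume (E ∩ J n x)
      · obtain ⟨m, hmx⟩ := hex
        exact Or.inl (Set.mem_iUnion.2 ⟨m, hx, hmx⟩)
      · exact Or.inr ⟨hex, hx⟩
    exact measure_mono_null hsub (measure_union_null (measure_iUnion_null h) h1)
  set F := F' m₁ with hFdef
  have hFE : F ⊆ E := fun x hx => hx.1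
  have hFX : F ⊆ X := hFE.trans hEX
  -- the covering bound
  have hbound : ∀ n, m₁ ≤ n →
      volume (F ∩ Q n) ≤ 2 * ∫⁻ x in E, g n x ∂volume := by
    intro n hn
    set D : Set (Set ℝ) := {I | ∃ x ∈ F, J n x = I} with hDdef
    have hDsub : D ⊆ (J n) '' X := by
      rintro I ⟨x, hxF, rfl⟩
      exact ⟨x, hFX hxF, rfl⟩
    have hDc : D.Countable := (countable_aux X (J n) (fun x hx => hJint x hx n)
      (fun x₁ h1 x₂ h2 => hdisj x₁ h1 x₂ h2 n)).mono hDsub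
    haveI := hDc.to_subtype
    have hwit : ∀ I : D, ∃ x, x ∈ F ∧ J n x = I := fun I => I.2
    choose wit hwitF hwitJ using hwit
    have hwitX : ∀ I : D, wit I ∈ X := fun I => hFX (hwitF I)
    have hImeas : ∀ I : D, MeasurableSet (I : Set ℝ) := fun I => by
      rw [← hwitJ I]; exact hJmeas _ (hwitX I) n
    have hcover : F ∩ Q n ⊆ ⋃ I ∈ D, (Q n ∩ I) := by
      rintro y ⟨hyF, hyQ⟩
      exact Set.mem_biUnion ⟨y, hyF, rfl⟩ ⟨hyQ, hmem y (hFX hyF) n⟩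
    have hIbound : ∀ I : D, volume (Q n ∩ (I : Set ℝ)) ≤
        2 * ∫⁻ x in E ∩ (I : Set ℝ), g n x ∂volume := by
      intro I
      have h0 := (hJvol _ (hwitX I) n).1
      have ht := (hJvol _ (hwitX I) n).2
      rw [hwitJ I] at h0 ht
      have hF2 := (hwitF I).2 n hn
      rw [hwitJ I] at hF2
      have hconst : ∀ y ∈ E ∩ (I : Set ℝ), g n y = g n (wit I) := by
        rintro y ⟨hyE, hyI⟩
        have hyX : y ∈ X := hEX hyE
        have : J n y = J n (wit I) := by
          apply hpiece n (wit I) (hwitX I) y hyX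
          rw [hwitJ I]; exact hyI
        rw [hgX n y hyX, hgX n (wit I) (hwitX I), this]
      have hint : ∫⁻ x in E ∩ (I : Set ℝ), g n x ∂volume =
          g n (wit I) * volume (E ∩ (I : Set ℝ)) := by
        rw [setLIntegral_congr_fun (hEmeas.inter (hImeas I))
          hconst, setLIntegral_const]
      rw [hint]
      calc volume (Q n ∩ (I : Set ℝ)) = g n (wit I) * volume (I : Set ℝ) := by
            rw [hgX n (wit I) (hwitX I), hwitJ I, ENNReal.div_mul_cancel h0 ht]
      _ ≤ g n (wit I) * (2 * volume (E ∩ (I : Set ℝ))) :=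
            mul_le_mul_right hF2 _
      _ = 2 * (g n (wit I) * volume (E ∩ (I : Set ℝ))) := by
            ring
    have hdisjI : Pairwise (Function.onFun Disjoint fun I : D => E ∩ (I : Set ℝ)) := by
      intro I₁ I₂ hne
      have : Disjoint (I₁ : Set ℝ) (I₂ : Set ℝ) := by
        rcases hdisj _ (hwitX I₁) _ (hwitX I₂) n with h | h
        · exfalso
          apply hne
          apply Subtype.ext
          rw [← hwitJ I₁, ← hwitJ I₂, h]
        · rw [← hwitJ I₁, ← hwitJ I₂]; exact h
      exact (this.mono Set.inter_subset_right Set.inter_subset_right)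
    calc volume (F ∩ Q n) ≤ ∑' I : D, volume (Q n ∩ (I : Set ℝ)) :=
          (measure_mono hcover).trans (measure_biUnion_le volume hDc _)
    _ ≤ ∑' I : D, 2 * ∫⁻ x in E ∩ (I : Set ℝ), g n x ∂volume :=
          ENNReal.tsum_le_tsum hIbound
    _ = 2 * ∑' I : D, ∫⁻ x in E ∩ (I : Set ℝ), g n x ∂volume :=
          ENNReal.tsum_mul_left
    _ = 2 * ∫⁻ x in ⋃ I : D, (E ∩ (I : Set ℝ)), g n x ∂volume := by
          rw [lintegral_iUnion (fun I => hEmeas.inter (hImeas I)) hdisjI]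
    _ ≤ 2 * ∫⁻ x in E, g n x ∂volume := by
          gcongr
          exact Set.iUnion_subset fun I => Set.inter_subset_left
  -- total sum is finite
  have hSfin : (∑' n, ∫⁻ x in E, g n x ∂volume) ≠ ⊤ := by
    rw [← lintegral_tsum (fun n => (hgm n).aemeasurable)]
    have hle : ∫⁻ x in E, (∑' n, g n x) ∂volume ≤ (N : ℝ≥0∞) * volume E := by
      calc ∫⁻ x in E, (∑' n, g n x) ∂volume ≤ ∫⁻ _ in E, (N : ℝ≥0∞) ∂volume :=
            setLIntegral_mono measurable_const fun x hx => hEsum x hx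
      _ = (N : ℝ≥0∞) * volume E := setLIntegral_const E _
    exact ne_top_of_le_ne_top (ENNReal.mul_ne_top (ENNReal.natCast_ne_top N) hEfin) hle
  have hFQfin : (∑' n : ℕ, volume (F ∩ Q (n + m₁))) ≠ ⊤ := by
    have hle : (∑' n : ℕ, volume (F ∩ Q (n + m₁))) ≤
        2 * ∑' n : ℕ, ∫⁻ x in E, g n x ∂volume := by
      calc (∑' n : ℕ, volume (F ∩ Q (n + m₁)))
          ≤ ∑' n : ℕ, 2 * ∫⁻ x in E, g (n + m₁) x ∂volume :=
            ENNReal.tsum_le_tsum fun n => hbound (n + m₁) (Nat.le_add_left m₁ n)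
      _ = 2 * ∑' n : ℕ, ∫⁻ x in E, g (n + m₁) x ∂volume := ENNReal.tsum_mul_left
      _ ≤ 2 * ∑' n : ℕ, ∫⁻ x in E, g n x ∂volume :=
            mul_le_mul_right (ENNReal.tsum_comp_le_tsum_of_injective
              (add_left_injective m₁) (fun n => ∫⁻ x in E, g n x ∂volume)) 2
    exact ne_top_of_le_ne_top
      (ENNReal.mul_ne_top (by norm_num) hSfin) hle
  -- conclusion
  have hFsub : ∀ k : ℕ, F ⊆ ⋃ n : ℕ, F ∩ Q (n + k + m₁) := by
    intro k x hxF
    have hxA : x ∈ A := hEA (hFE hxF)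
    have hinf : {j | x ∈ Q j}.Infinite := ((hAdesc x).1 hxA).2
    have hfreq := Nat.frequently_atTop_iff_infinite.2 hinf
    obtain ⟨j, hjge, hjmem⟩ := (frequently_atTop.1 hfreq) (k + m₁)
    have hjeq : j - (k + m₁) + k + m₁ = j := by omega
    refine Set.mem_iUnion.2 ⟨j - (k + m₁), hxF, ?_⟩
    rw [hjeq]
    exact hjmem
  have htail : Tendsto (fun k => ∑' n : ℕ, volume (F ∩ Q ((n + k) + m₁)))
      atTop (𝓝 0) :=
    ENNReal.tendsto_sum_nat_add (fun n => volume (F ∩ Q (n + m₁))) hFQfin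
  have hgetail : ∀ k, volume F ≤ ∑' n : ℕ, volume (F ∩ Q ((n + k) + m₁)) := by
    intro k
    exact (measure_mono (hFsub k)).trans (measure_iUnion_le _)
  have : volume F ≤ 0 := ge_of_tendsto' htail hgetail
  exact hm₁ (le_antisymm this zero_le)
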